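/- arXiv:1910.12313 — 5 statements merged into one kernel-verified Lean document; each statement's English description precedes it below -/
import Mathlib

section
/- Define lambda_mu^{pm}(K) = kappa/2 + mu(kappa/2 + 1 - cos K) ± sqrt(P_mu(cos K))/2, where P_mu(t) = (kappa-2t+2)^2 mu^2 + 2 kappa(kappa+2t-2) mu + kappa^2. Then for mu > 0 sufficiently small, the derivatives satisfy |(lambda_mu^+)'(K)| ≤ mu |K| and |(lambda_mu^-)'(K)| ≤ 2 mu |K| for all real K. -/
open Real

private lemma stmt2_aux (κ μ : ℝ) (hκ : 0 < κ) (hμ : 0 < μ) (hμ₀ : μ * (κ+4) < κ)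
    (K : ℝ) (s : ℝ) :
    HasDerivAt (fun K : ℝ => κ/2 + μ*(κ/2 + 1 - Real.cos K)
        + s * (Real.sqrt ((κ - 2*Real.cos K + 2)^2 * μ^2
            + 2*κ*(κ + 2*Real.cos K - 2)*μ + κ^2) / 2))
      (μ * Real.sin K * (1 - s * ((2*μ*Real.cos K + κ - (κ+2)*μ) /
          Real.sqrt ((κ - 2*Real.cos K + 2)^2 * μ^2
            + 2*κ*(κ + 2*Real.cos K - 2)*μ + κ^2)))) K := by
  set Q : ℝ := 2*μ*Real.cos K + κ - (κ+2)*μ with hQdef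
  have hQpos : 0 < Q := by
    have hc := Real.neg_one_le_cos K
    nlinarith
  have hPQ : (κ - 2*Real.cos K + 2)^2 * μ^2
      + 2*κ*(κ + 2*Real.cos K - 2)*μ + κ^2 = Q^2 + 4*κ^2*μ := by
    simp only [hQdef]; ring
  have hPpos : 0 < (κ - 2*Real.cos K + 2)^2 * μ^2
      + 2*κ*(κ + 2*Real.cos K - 2)*μ + κ^2 := by
    rw [hPQ]; positivity
  -- derivative of the inner polynomial in cos K
  have hcos : HasDerivAt Real.cos (-Real.sin K) K := Real.hasDerivAt_cos K
  have hu : HasDerivAt (fun K : ℝ => (κ - 2*Real.cos K + 2)^2 * μ^2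
      + 2*κ*(κ + 2*Real.cos K - 2)*μ + κ^2)
      (-4 * Real.sin K * μ * Q) K := by
    have h1 : HasDerivAt (fun K : ℝ => κ - 2*Real.cos K + 2) (2 * Real.sin K) K := by
      have := ((hcos.const_mul 2).const_sub κ).add_const 2
      exact this.congr_deriv (by ring)
    have h2 : HasDerivAt (fun K : ℝ => κ + 2*Real.cos K - 2) (-(2 * Real.sin K)) K := by
      have := ((hcos.const_mul 2).const_add κ).sub_const 2
      exact this.congr_deriv (by ring)
    have := (((h1.pow 2).mul_const (μ^2)).add
      (((h2.const_mul (2*κ)).mul_const μ))).add_const (κ^2)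
    refine this.congr_deriv ?_
    simp only [hQdef]; ring
  have hsq : HasDerivAt (fun K : ℝ => Real.sqrt ((κ - 2*Real.cos K + 2)^2 * μ^2
      + 2*κ*(κ + 2*Real.cos K - 2)*μ + κ^2))
      ((-4 * Real.sin K * μ * Q) / (2 * Real.sqrt ((κ - 2*Real.cos K + 2)^2 * μ^2
          + 2*κ*(κ + 2*Real.cos K - 2)*μ + κ^2))) K := by
    have := (Real.hasDerivAt_sqrt hPpos.ne').comp K hu
    refine this.congr_deriv ?_; field_simp
  have hbase : HasDerivAt (fun K : ℝ => κ/2 + μ*(κ/2 + 1 - Real.cos K))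
      (μ * Real.sin K) K := by
    have := ((hcos.const_sub (κ/2+1)).const_mul μ).const_add (κ/2)
    exact this.congr_deriv (by ring)
  have htot := hbase.add (((hsq.const_mul s).div_const 2))
  have hsqrtpos : 0 < Real.sqrt ((κ - 2*Real.cos K + 2)^2 * μ^2
      + 2*κ*(κ + 2*Real.cos K - 2)*μ + κ^2) := Real.sqrt_pos.mpr hPpos
  convert htot using 1
  rotate_left 2
  · ext x; simp only [Pi.add_apply]; ring
  · field_simp
    ring
  · rfl
  · rfl

/-- With `λ_μ^±(K) = κ/2 + μ(κ/2 + 1 - cos K) ± sqrt (P_μ (cos K)) / 2`,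
for sufficiently small `μ > 0` one has `|(λ_μ^+)'(K)| ≤ μ |K|` and
`|(λ_μ^-)'(K)| ≤ 2 μ |K|` for all real `K`. -/
theorem stmt2 (κ : ℝ) (hκ : 0 < κ) :
    ∃ μ₀ > 0, ∀ μ : ℝ, 0 < μ → μ < μ₀ →
      (∀ K : ℝ,
        |deriv (fun K : ℝ =>
            κ/2 + μ*(κ/2 + 1 - Real.cos K)
              + Real.sqrt ((κ - 2*Real.cos K + 2)^2 * μ^2
                  + 2*κ*(κ + 2*Real.cos K - 2)*μ + κ^2) / 2) K| ≤ μ * |K|) ∧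
      (∀ K : ℝ,
        |deriv (fun K : ℝ =>
            κ/2 + μ*(κ/2 + 1 - Real.cos K)
              - Real.sqrt ((κ - 2*Real.cos K + 2)^2 * μ^2
                  + 2*κ*(κ + 2*Real.cos K - 2)*μ + κ^2) / 2) K| ≤ 2 * μ * |K|) := by
  have hκ4 : 0 < κ + 4 := by linarith
  refine ⟨κ/(κ+4), by positivity, fun μ hμ hμ₀ => ?_⟩
  have hμκ : μ * (κ+4) < κ := by
    rw [div_eq_mul_inv] at hμ₀
    calc μ * (κ+4) < κ * (κ+4)⁻¹ * (κ+4) := by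
          exact mul_lt_mul_of_pos_right hμ₀ hκ4
      _ = κ := by field_simp
  have hfacts : ∀ K : ℝ,
      0 < 2*μ*Real.cos K + κ - (κ+2)*μ ∧
      (2*μ*Real.cos K + κ - (κ+2)*μ) / Real.sqrt ((κ - 2*Real.cos K + 2)^2 * μ^2
            + 2*κ*(κ + 2*Real.cos K - 2)*μ + κ^2) < 1 ∧
      0 < Real.sqrt ((κ - 2*Real.cos K + 2)^2 * μ^2
            + 2*κ*(κ + 2*Real.cos K - 2)*μ + κ^2) := by
    intro K
    set Q : ℝ := 2*μ*Real.cos K + κ - (κ+2)*μ with hQdef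
    have hQpos : 0 < Q := by
      have hc := Real.neg_one_le_cos K
      nlinarith
    have hPQ : (κ - 2*Real.cos K + 2)^2 * μ^2
        + 2*κ*(κ + 2*Real.cos K - 2)*μ + κ^2 = Q^2 + 4*κ^2*μ := by
      simp only [hQdef]; ring
    have hPpos : 0 < (κ - 2*Real.cos K + 2)^2 * μ^2
        + 2*κ*(κ + 2*Real.cos K - 2)*μ + κ^2 := by rw [hPQ]; positivity
    have hsqpos := Real.sqrt_pos.mpr hPpos
    refine ⟨hQpos, ?_, hsqpos⟩
    rw [div_lt_one hsqpos]
    have : Q^2 < (κ - 2*Real.cos K + 2)^2 * μ^2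
        + 2*κ*(κ + 2*Real.cos K - 2)*μ + κ^2 := by rw [hPQ]; have := mul_pos (pow_pos hκ 2) hμ; linarith
    exact (Real.lt_sqrt hQpos.le).mpr this
  constructor
  · intro K
    obtain ⟨hQpos, hlt, hsqpos⟩ := hfacts K
    have h := stmt2_aux κ μ hκ hμ hμκ K 1
    have heq : (fun K : ℝ => κ/2 + μ*(κ/2 + 1 - Real.cos K)
        + Real.sqrt ((κ - 2*Real.cos K + 2)^2 * μ^2
            + 2*κ*(κ + 2*Real.cos K - 2)*μ + κ^2) / 2) =
        (fun K : ℝ => κ/2 + μ*(κ/2 + 1 - Real.cos K)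
        + 1 * (Real.sqrt ((κ - 2*Real.cos K + 2)^2 * μ^2
            + 2*κ*(κ + 2*Real.cos K - 2)*μ + κ^2) / 2)) := by ext x; ring
    rw [heq, h.deriv]
    set r : ℝ := (2*μ*Real.cos K + κ - (κ+2)*μ) /
        Real.sqrt ((κ - 2*Real.cos K + 2)^2 * μ^2
            + 2*κ*(κ + 2*Real.cos K - 2)*μ + κ^2) with hr
    have hr0 : 0 < r := div_pos hQpos hsqpos
    have h1 : |1 - 1 * r| ≤ 1 := by rw [abs_le]; constructor <;> [linarith; linarith]
    calc |μ * Real.sin K * (1 - 1 * r)| = μ * |Real.sin K| * |1 - 1*r| := by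
          rw [abs_mul, abs_mul, abs_of_pos hμ]
      _ ≤ μ * |Real.sin K| * 1 := by
          apply mul_le_mul_of_nonneg_left h1; positivity
      _ = μ * |Real.sin K| := by ring
      _ ≤ μ * |K| := by
          apply mul_le_mul_of_nonneg_left (Real.abs_sin_le_abs) hμ.le
  · intro K
    obtain ⟨hQpos, hlt, hsqpos⟩ := hfacts K
    have h := stmt2_aux κ μ hκ hμ hμκ K (-1)
    have heq : (fun K : ℝ => κ/2 + μ*(κ/2 + 1 - Real.cos K)
        - Real.sqrt ((κ - 2*Real.cos K + 2)^2 * μ^2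
            + 2*κ*(κ + 2*Real.cos K - 2)*μ + κ^2) / 2) =
        (fun K : ℝ => κ/2 + μ*(κ/2 + 1 - Real.cos K)
        + (-1) * (Real.sqrt ((κ - 2*Real.cos K + 2)^2 * μ^2
            + 2*κ*(κ + 2*Real.cos K - 2)*μ + κ^2) / 2)) := by ext x; ring
    rw [heq, h.deriv]
    set r : ℝ := (2*μ*Real.cos K + κ - (κ+2)*μ) /
        Real.sqrt ((κ - 2*Real.cos K + 2)^2 * μ^2
            + 2*κ*(κ + 2*Real.cos K - 2)*μ + κ^2) with hr
    have hr0 : 0 < r := div_pos hQpos hsqpos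
    have h1 : |1 - (-1) * r| ≤ 2 := by rw [abs_le]; constructor <;> [linarith; linarith]
    calc |μ * Real.sin K * (1 - (-1) * r)| = μ * |Real.sin K| * |1 - (-1)*r| := by
          rw [abs_mul, abs_mul, abs_of_pos hμ]
      _ ≤ μ * |Real.sin K| * 2 := by
          apply mul_le_mul_of_nonneg_left h1; positivity
      _ = 2 * (μ * |Real.sin K|) := by ring
      _ ≤ 2 * (μ * |K|) := by
          apply mul_le_mul_of_nonneg_left _ (by norm_num)
          exact mul_le_mul_of_nonneg_left (Real.abs_sin_le_abs) hμ.le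
      _ = 2 * μ * |K| := by ring
end

section
/- For kappa > 0 and mu > 0 sufficiently small, lambda_mu^-(0) = 0, and for all real K: 0 ≤ lambda_mu^-(K) ≤ lambda_mu^-(pi) < kappa(1+mu) = lambda_mu^+(0) < lambda_mu^+(K) (for K not a multiple of 2 pi) ≤ lambda_mu^+(pi), where lambda_mu^{pm}(K) = kappa/2 + mu(kappa/2 + 1 - cos K) ± sqrt(P_mu(cos K))/2 and P_mu(t) = (kappa-2t+2)^2 mu^2 + 2 kappa(kappa+2t-2) mu + kappa^2. -/
noncomputable def Pmu (κ μ t : ℝ) : ℝ :=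
  (κ - 2*t + 2)^2 * μ^2 + 2*κ*(κ + 2*t - 2)*μ + κ^2

noncomputable def lamMinus (κ μ K : ℝ) : ℝ :=
  κ/2 + μ*(κ/2 + 1 - Real.cos K) - Real.sqrt (Pmu κ μ (Real.cos K)) / 2

noncomputable def lamPlus (κ μ K : ℝ) : ℝ :=
  κ/2 + μ*(κ/2 + 1 - Real.cos K) + Real.sqrt (Pmu κ μ (Real.cos K)) / 2

lemma Pmu_eq_q (κ μ c : ℝ) : Pmu κ μ c = (2*μ*c + κ - (κ+2)*μ)^2 + 4*κ^2*μ := by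
  unfold Pmu; ring

lemma Pmu_nonneg (κ μ c : ℝ) (hμ : 0 ≤ μ) : 0 ≤ Pmu κ μ c := by
  rw [Pmu_eq_q]; positivity

lemma sqrtP_sq (κ μ c : ℝ) (hμ : 0 ≤ μ) :
    Real.sqrt (Pmu κ μ c) ^ 2 = Pmu κ μ c :=
  Real.sq_sqrt (Pmu_nonneg κ μ c hμ)

lemma q_pos (κ μ c : ℝ) (hκ : 0 < κ) (hμ : 0 < μ) (hμ' : μ < κ/(κ+4)) (hc : -1 ≤ c) :
    0 < 2*μ*c + κ - (κ+2)*μ := by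
  have h4 : 0 < κ + 4 := by linarith
  rw [lt_div_iff₀ h4] at hμ'
  nlinarith

lemma q_lt_sqrtP (κ μ c : ℝ) (hκ : 0 < κ) (hμ : 0 < μ) :
    2*μ*c + κ - (κ+2)*μ < Real.sqrt (Pmu κ μ c) := by
  have hs := sqrtP_sq κ μ c hμ.le
  have hs0 : 0 ≤ Real.sqrt (Pmu κ μ c) := Real.sqrt_nonneg _
  have hP := Pmu_eq_q κ μ c
  nlinarith [sq_nonneg (Real.sqrt (Pmu κ μ c) - (2*μ*c + κ - (κ+2)*μ)), mul_pos (mul_pos hκ hκ) hμ]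

lemma negq_lt_sqrtP (κ μ c : ℝ) (hκ : 0 < κ) (hμ : 0 < μ) :
    -(2*μ*c + κ - (κ+2)*μ) < Real.sqrt (Pmu κ μ c) := by
  have hs := sqrtP_sq κ μ c hμ.le
  have hs0 : 0 ≤ Real.sqrt (Pmu κ μ c) := Real.sqrt_nonneg _
  have hP := Pmu_eq_q κ μ c
  nlinarith [sq_nonneg (Real.sqrt (Pmu κ μ c) + (2*μ*c + κ - (κ+2)*μ)), mul_pos (mul_pos hκ hκ) hμ]

/-- strict difference bound -/
lemma sqrtP_diff_lt (κ μ c₁ c₂ : ℝ) (hκ : 0 < κ) (hμ : 0 < μ) (hμ' : μ < κ/(κ+4))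
    (hc₂ : -1 ≤ c₂) (h : c₂ < c₁) :
    Real.sqrt (Pmu κ μ c₁) - Real.sqrt (Pmu κ μ c₂) < 2*μ*(c₁ - c₂) := by
  have h1 := sqrtP_sq κ μ c₁ hμ.le
  have h2 := sqrtP_sq κ μ c₂ hμ.le
  have q1 := q_lt_sqrtP κ μ c₁ hκ hμ
  have q2 := q_lt_sqrtP κ μ c₂ hκ hμ
  have hs1 : 0 ≤ Real.sqrt (Pmu κ μ c₁) := Real.sqrt_nonneg _
  have hs2 : 0 ≤ Real.sqrt (Pmu κ μ c₂) := Real.sqrt_nonneg _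
  have hq2 := q_pos κ μ c₂ hκ hμ hμ' hc₂
  have hdiff : Pmu κ μ c₁ - Pmu κ μ c₂ =
      2*μ*(c₁-c₂) * ((2*μ*c₁ + κ - (κ+2)*μ) + (2*μ*c₂ + κ - (κ+2)*μ)) := by
    unfold Pmu; ring
  nlinarith [mul_pos hμ (sub_pos.mpr h)]

lemma sqrtP_diff_le (κ μ c₁ c₂ : ℝ) (hκ : 0 < κ) (hμ : 0 < μ) (hμ' : μ < κ/(κ+4))
    (hc₂ : -1 ≤ c₂) (h : c₂ ≤ c₁) :
    Real.sqrt (Pmu κ μ c₁) - Real.sqrt (Pmu κ μ c₂) ≤ 2*μ*(c₁ - c₂) := by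
  rcases eq_or_lt_of_le h with rfl | h
  · simp
  · exact (sqrtP_diff_lt κ μ c₁ c₂ hκ hμ hμ' hc₂ h).le

lemma sqrtP_mono (κ μ c₁ c₂ : ℝ) (hκ : 0 < κ) (hμ : 0 < μ) (hμ' : μ < κ/(κ+4))
    (hc₂ : -1 ≤ c₂) (h : c₂ ≤ c₁) :
    Real.sqrt (Pmu κ μ c₂) ≤ Real.sqrt (Pmu κ μ c₁) := by
  apply Real.sqrt_le_sqrt
  have hq2 := q_pos κ μ c₂ hκ hμ hμ' hc₂
  have hq1 : 0 < 2*μ*c₁ + κ - (κ+2)*μ := q_pos κ μ c₁ hκ hμ hμ' (hc₂.trans h)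
  have hdiff : Pmu κ μ c₁ - Pmu κ μ c₂ =
      2*μ*(c₁-c₂) * ((2*μ*c₁ + κ - (κ+2)*μ) + (2*μ*c₂ + κ - (κ+2)*μ)) := by
    unfold Pmu; ring
  have hpos : 0 ≤ 2*μ*(c₁-c₂) * ((2*μ*c₁ + κ - (κ+2)*μ) + (2*μ*c₂ + κ - (κ+2)*μ)) := by
    apply mul_nonneg (by nlinarith) (by linarith)
  linarith

lemma sqrtP_one (κ μ : ℝ) (hκ : 0 < κ) (hμ : 0 < μ) :
    Real.sqrt (Pmu κ μ 1) = κ*(1+μ) := by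
  have : Pmu κ μ 1 = (κ*(1+μ))^2 := by unfold Pmu; ring
  rw [this, Real.sqrt_sq (by nlinarith)]

/-- For `κ > 0` and sufficiently small `μ > 0`: `λ_μ^-(0) = 0`, and for all
real `K`: `0 ≤ λ_μ^-(K) ≤ λ_μ^-(π) < κ(1+μ) = λ_μ^+(0) < λ_μ^+(K)` (strict for `K` not a
multiple of `2π`) `≤ λ_μ^+(π)`. -/
theorem stmt3 (κ : ℝ) (hκ : 0 < κ) :
    ∃ μ₀ > 0, ∀ μ : ℝ, 0 < μ → μ < μ₀ →
      lamMinus κ μ 0 = 0 ∧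
      (∀ K : ℝ, 0 ≤ lamMinus κ μ K ∧ lamMinus κ μ K ≤ lamMinus κ μ Real.pi) ∧
      lamMinus κ μ Real.pi < κ*(1+μ) ∧
      lamPlus κ μ 0 = κ*(1+μ) ∧
      (∀ K : ℝ, (¬ ∃ n : ℤ, K = 2*Real.pi*n) → lamPlus κ μ 0 < lamPlus κ μ K) ∧
      (∀ K : ℝ, lamPlus κ μ K ≤ lamPlus κ μ Real.pi) := by
  have h4 : 0 < κ + 4 := by linarith
  refine ⟨κ/(κ+4), by positivity, fun μ hμ hμ' => ?_⟩
  have hmin0 : lamMinus κ μ 0 = 0 := by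
    unfold lamMinus
    rw [Real.cos_zero, sqrtP_one κ μ hκ hμ]; ring
  have hplus0 : lamPlus κ μ 0 = κ*(1+μ) := by
    unfold lamPlus
    rw [Real.cos_zero, sqrtP_one κ μ hκ hμ]; ring
  refine ⟨hmin0, fun K => ⟨?_, ?_⟩, ?_, hplus0, fun K hK => ?_, fun K => ?_⟩
  · -- 0 ≤ lamMinus
    unfold lamMinus
    set c := Real.cos K with hc
    have hc1 : c ≤ 1 := Real.cos_le_one K
    have hA : 0 ≤ κ + (κ - 2*c + 2)*μ := by nlinarith
    have hle : Real.sqrt (Pmu κ μ c) ≤ κ + (κ - 2*c + 2)*μ := by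
      rw [show κ + (κ - 2*c + 2)*μ = Real.sqrt ((κ + (κ - 2*c + 2)*μ)^2) from
        (Real.sqrt_sq hA).symm]
      apply Real.sqrt_le_sqrt
      unfold Pmu
      nlinarith [mul_nonneg (mul_nonneg hκ.le hμ.le) (sub_nonneg.mpr hc1)]
    linarith
  · -- lamMinus K ≤ lamMinus π
    unfold lamMinus
    rw [Real.cos_pi]
    have hc1 : -1 ≤ Real.cos K := Real.neg_one_le_cos K
    have h1 := sqrtP_mono κ μ (Real.cos K) (-1) hκ hμ hμ' le_rfl hc1
    have h2 := mul_le_mul_of_nonneg_left hc1 hμ.le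
    linarith
  · -- lamMinus π < κ(1+μ)
    unfold lamMinus
    rw [Real.cos_pi]
    have := negq_lt_sqrtP κ μ (-1) hκ hμ
    nlinarith [mul_pos hκ hμ]
  · -- strict lamPlus
    have hc1 : Real.cos K ≤ 1 := Real.cos_le_one K
    have hne : Real.cos K ≠ 1 := by
      intro h
      rcases (Real.cos_eq_one_iff K).mp h with ⟨n, hn⟩
      exact hK ⟨n, by linarith [hn]⟩
    have hlt : Real.cos K < 1 := lt_of_le_of_ne hc1 hne
    unfold lamPlus
    rw [Real.cos_zero]
    have := sqrtP_diff_lt κ μ 1 (Real.cos K) hκ hμ hμ' (Real.neg_one_le_cos K) hlt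
    nlinarith
  · -- lamPlus K ≤ lamPlus π
    unfold lamPlus
    rw [Real.cos_pi]
    have := sqrtP_diff_le κ μ (Real.cos K) (-1) hκ hμ hμ' le_rfl (Real.neg_one_le_cos K)
    nlinarith
end

section
/- With omega_mu the unique positive solution of c^2 mu omega^2 = lambda_mu^+(omega) and Omega_mu = sqrt(kappa(1+mu)/(c^2 mu)), one has omega_mu - Omega_mu = O(mu^{3/2}) as mu → 0^+: there exist C, mu_0 > 0 such that |omega_mu - Omega_mu| ≤ C mu^{3/2} for all 0 < mu < mu_0. -/
set_option maxHeartbeats 1000000 in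
/-- If `ω μ` is, for each small `μ > 0`, the (unique) positive solution of
`c^2 μ ω^2 = λ_μ^+(ω)`, and `Ω_μ = sqrt (κ(1+μ)/(c^2 μ))`, then
`ω μ - Ω_μ = O(μ^{3/2})` as `μ → 0⁺`. -/
theorem stmt6 (c κ : ℝ) (hc : 1 < c^2) (hκ : 0 < κ)
    (ω : ℝ → ℝ) (μ₀ : ℝ) (hμ₀ : 0 < μ₀)
    (hω : ∀ μ : ℝ, 0 < μ → μ < μ₀ →
      0 < ω μ ∧ c^2*μ*(ω μ)^2 = lamPlus κ μ (ω μ)) :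
    ∃ C > 0, ∃ μ₁ > 0, ∀ μ : ℝ, 0 < μ → μ < μ₁ →
      |ω μ - Real.sqrt (κ*(1+μ)/(c^2*μ))| ≤ C * μ ^ ((3:ℝ)/2) := by
  have hc0 : (0:ℝ) < c^2 := lt_trans one_pos hc
  have hr : 0 < Real.sqrt κ := Real.sqrt_pos.mpr hκ
  have hb : 1 ≤ |c| := by
    have := Real.sqrt_le_sqrt hc.le
    rwa [Real.sqrt_one, Real.sqrt_sq_eq_abs] at this
  refine ⟨8 * |c| / Real.sqrt κ, by positivity, min μ₀ (κ/8),
    lt_min hμ₀ (by linarith), ?_⟩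
  intro μ hμ hμ'
  obtain ⟨hωpos, heq⟩ := hω μ hμ (lt_of_lt_of_le hμ' (min_le_left _ _))
  have hμ8 : μ < κ/8 := lt_of_lt_of_le hμ' (min_le_right _ _)
  simp only [lamPlus] at heq
  set t := Real.cos (ω μ) with htdef
  have ht1 : t ≤ 1 := Real.cos_le_one _
  have ht2 : -1 ≤ t := Real.neg_one_le_cos _
  set A := κ*(1+μ) - 2*μ*(1-t) with hA
  have hA1 : κ/2 ≤ A := by nlinarith
  have hP : Pmu κ μ t = A^2 + 8*κ*μ^2*(1-t) := by simp only [Pmu, hA]; ring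
  have hsqlb : A ≤ Real.sqrt (Pmu κ μ t) := by
    rw [hP]
    have h0 : A = Real.sqrt (A^2) := (Real.sqrt_sq (by linarith)).symm
    nth_rewrite 1 [h0]
    apply Real.sqrt_le_sqrt
    nlinarith [mul_nonneg (mul_nonneg hκ.le (sq_nonneg μ)) (by linarith : (0:ℝ) ≤ 1 - t)]
  have hsqub : Real.sqrt (Pmu κ μ t) ≤ A + 16*μ^2 := by
    rw [hP]
    have h1 : A^2 + 8*κ*μ^2*(1-t) ≤ (A + 16*μ^2)^2 := by
      nlinarith [sq_nonneg μ, mul_nonneg (sub_nonneg.mpr hA1) (sq_nonneg μ),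
        mul_nonneg (mul_nonneg hκ.le (sq_nonneg μ)) (by linarith : (0:ℝ) ≤ 1+t),
        sq_nonneg (μ^2)]
    calc Real.sqrt (A^2 + 8*κ*μ^2*(1-t)) ≤ Real.sqrt ((A + 16*μ^2)^2) :=
          Real.sqrt_le_sqrt h1
      _ = A + 16*μ^2 := Real.sqrt_sq (by nlinarith [sq_nonneg μ])
  -- key identity
  have hid : c^2*μ*(ω μ)^2 = κ*(1+μ) + (Real.sqrt (Pmu κ μ t) - A)/2 := by
    rw [heq, hA]; ring
  have hlow : κ*(1+μ) ≤ c^2*μ*(ω μ)^2 := by rw [hid]; linarith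
  have hhigh : c^2*μ*(ω μ)^2 ≤ κ*(1+μ) + 8*μ^2 := by rw [hid]; linarith
  set Ω := Real.sqrt (κ*(1+μ)/(c^2*μ)) with hΩ
  have hc2μ : 0 < c^2*μ := by positivity
  have hΩsq : Ω^2 = κ*(1+μ)/(c^2*μ) := Real.sq_sqrt (by positivity)
  have hΩpos : 0 < Ω := Real.sqrt_pos.mpr (by positivity)
  have hΩsq' : Ω^2 * (c^2*μ) = κ*(1+μ) := by
    rw [hΩsq, div_mul_cancel₀ _ hc2μ.ne']
  have hd1 : Ω^2 ≤ (ω μ)^2 := by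
    rw [hΩsq, div_le_iff₀ hc2μ]; nlinarith
  have hD : 0 ≤ (ω μ)^2 - Ω^2 := sub_nonneg.mpr hd1
  have h3 : μ*((ω μ)^2 - Ω^2) ≤ 8*μ^2 := by
    nlinarith [mul_nonneg (mul_nonneg (by linarith : (0:ℝ) ≤ c^2 - 1) hμ.le) hD]
  have hd2 : (ω μ)^2 - Ω^2 ≤ 8*μ := by nlinarith [h3]
  have hωΩ : Ω ≤ ω μ := by nlinarith
  have h1 : (ω μ - Ω) * Ω ≤ 8*μ := by
    nlinarith [mul_nonneg hωpos.le (sub_nonneg.mpr hωΩ)]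
  -- lower bound for Ω
  have hs : (0:ℝ) ≤ Real.sqrt μ := Real.sqrt_nonneg μ
  have h2 : Real.sqrt κ ≤ Ω * Real.sqrt μ * |c| := by
    have e1 : Ω * Real.sqrt μ = Real.sqrt (κ*(1+μ)/c^2) := by
      rw [hΩ, ← Real.sqrt_mul (by positivity)]
      congr 1
      field_simp
    have e2 : Real.sqrt (κ/c^2) ≤ Real.sqrt (κ*(1+μ)/c^2) := by
      apply Real.sqrt_le_sqrt
      rw [div_le_div_iff₀ hc0 hc0]
      nlinarith
    have e3 : Real.sqrt (κ/c^2) = Real.sqrt κ / |c| := by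
      rw [Real.sqrt_div hκ.le, Real.sqrt_sq_eq_abs]
    have hbc : 0 < |c| := lt_of_lt_of_le one_pos hb
    calc Real.sqrt κ = Real.sqrt κ / |c| * |c| := by field_simp
      _ ≤ Real.sqrt (κ*(1+μ)/c^2) * |c| := by
          apply mul_le_mul_of_nonneg_right _ hbc.le
          rw [← e3]; exact e2
      _ = Ω * Real.sqrt μ * |c| := by rw [e1]
  have hmu32 : μ ^ ((3:ℝ)/2) = μ * Real.sqrt μ := by
    rw [show (3:ℝ)/2 = 1 + 1/2 by norm_num, Real.rpow_add hμ, Real.rpow_one,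
      Real.sqrt_eq_rpow]
  rw [abs_of_nonneg (sub_nonneg.mpr hωΩ), hmu32, div_mul_eq_mul_div,
    le_div_iff₀ hr]
  have hsub : (0:ℝ) ≤ ω μ - Ω := sub_nonneg.mpr hωΩ
  nlinarith [mul_le_mul_of_nonneg_left h2 hsub,
    mul_le_mul_of_nonneg_right h1 (mul_nonneg hs (abs_nonneg c))]
end

section
/- Let c ≠ 0, kappa > 0, 0 < mu < 1, and tau_0 > 0. There exists a constant C > 0 depending only on c, kappa, tau_0 such that for all real tau with 0 < |tau| < tau_0 and all j in {0,1,2}: sup over real k of (1+k^2)^{j/2} / |c^2 (k + i tau)^2 - kappa(1+mu)| ≤ C / |tau|. -/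
set_option maxHeartbeats 1000000 in
/-- For `c ≠ 0`, `κ > 0`, `0 < μ < 1`, `τ₀ > 0` there is `C > 0` (depending
only on `c`, `κ`, `τ₀`) such that for all real `τ` with `0 < |τ| < τ₀` and all
`j ∈ {0,1,2}`, `sup_k (1+k^2)^{j/2} / |c^2 (k+iτ)^2 - κ(1+μ)| ≤ C/|τ|`. -/
theorem stmt8 (c κ μ τ₀ : ℝ) (hc : c ≠ 0) (hκ : 0 < κ) (hμ : 0 < μ) (hμ1 : μ < 1)
    (hτ₀ : 0 < τ₀) :
    ∃ C > 0, ∀ τ : ℝ, 0 < |τ| → |τ| < τ₀ → ∀ j : ℕ, j ≤ 2 → ∀ k : ℝ,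
      (1 + k^2) ^ ((j:ℝ)/2) /
          ‖(c:ℂ)^2 * ((k:ℂ) + (τ:ℂ)*Complex.I)^2 - (κ:ℂ)*(1+(μ:ℂ))‖
        ≤ C / |τ| := by
  have hc2 : (0:ℝ) < c^2 := by positivity
  have hκμ : (0:ℝ) < κ*(1+μ) := by nlinarith
  set a : ℝ := Real.sqrt (κ*(1+μ)) / |c| with ha
  have ha0 : 0 < a := by
    rw [ha]; positivity
  have har : a^2 * c^2 = κ*(1+μ) := by
    rw [ha, div_pow, sq_abs, Real.sq_sqrt hκμ.le]
    field_simp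
  set K2 : ℝ := 2*(τ₀^2 + κ*(1+μ)/c^2) with hK2
  have hK2pos : 0 < K2 := by positivity
  set C1 : ℝ := (2/c^2)*(1 + 1/K2) * τ₀ with hC1
  set C2 : ℝ := (1+K2)/(c^2*a) with hC2
  have hC1pos : 0 < C1 := by positivity
  have hC2pos : 0 < C2 := by positivity
  refine ⟨max C1 C2, lt_max_of_lt_left hC1pos, ?_⟩
  intro τ hτ hττ j hj k
  set z : ℂ := (k:ℂ) + (τ:ℂ)*Complex.I with hz
  set D : ℝ := ‖(c:ℂ)^2 * z^2 - (κ:ℂ)*(1+(μ:ℂ))‖ with hD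
  -- numerator bound
  have hnum : (1 + k^2) ^ ((j:ℝ)/2) ≤ 1 + k^2 := by
    have h1 : (1:ℝ) ≤ 1 + k^2 := by nlinarith
    calc (1 + k^2) ^ ((j:ℝ)/2) ≤ (1 + k^2) ^ (1:ℝ) := by
          apply Real.rpow_le_rpow_of_exponent_le h1
          have : (j:ℝ) ≤ 2 := by exact_mod_cast hj
          linarith
      _ = 1 + k^2 := Real.rpow_one _
  have hnum0 : (0:ℝ) ≤ (1 + k^2) ^ ((j:ℝ)/2) := by positivity
  -- factorization
  have harC : ((a:ℝ):ℂ)^2 * (c:ℂ)^2 = (κ:ℂ)*(1+(μ:ℂ)) := by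
    have := congrArg (Complex.ofReal) har
    push_cast at this
    exact this
  have hfac : (c:ℂ)^2 * z^2 - (κ:ℂ)*(1+(μ:ℂ)) = (c:ℂ)^2 * (z - (a:ℝ)) * (z + (a:ℝ)) := by
    linear_combination harC
  have hDfac : D = c^2 * (‖z - (a:ℝ)‖ * ‖z + (a:ℝ)‖) := by
    rw [hD, hfac, norm_mul, norm_mul]
    simp [Complex.norm_real, sq_abs, abs_of_pos hc2]
    ring
  have him1 : |τ| ≤ ‖z - (a:ℝ)‖ := by
    have := Complex.abs_im_le_norm (z - (a:ℝ))
    simpa [hz] using this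
  have him2 : |τ| ≤ ‖z + (a:ℝ)‖ := by
    have := Complex.abs_im_le_norm (z + (a:ℝ))
    simpa [hz] using this
  have hre1 : |k - a| ≤ ‖z - (a:ℝ)‖ := by
    have := Complex.abs_re_le_norm (z - (a:ℝ))
    simpa [hz] using this
  have hre2 : |k + a| ≤ ‖z + (a:ℝ)‖ := by
    have := Complex.abs_re_le_norm (z + (a:ℝ))
    simpa [hz] using this
  -- lower bound 1 : D ≥ c^2 * a * |τ|
  have hD1 : c^2 * a * |τ| ≤ D := by
    rw [hDfac]
    rcases le_or_gt 0 k with hk | hk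
    · have h1 : a ≤ ‖z + (a:ℝ)‖ := le_trans (by rw [abs_of_nonneg (by linarith)]; linarith) hre2
      have := mul_le_mul him1 h1 ha0.le (norm_nonneg _)
      nlinarith
    · have h1 : a ≤ ‖z - (a:ℝ)‖ := le_trans (by rw [abs_of_nonpos (by linarith)]; linarith) hre1
      have := mul_le_mul h1 him2 (abs_nonneg τ) (norm_nonneg _)
      nlinarith
  have hDpos : 0 < D := lt_of_lt_of_le (by positivity) hD1
  -- lower bound 2 : D ≥ c^2*(k^2-τ^2) - κ*(1+μ)
  have hD2 : c^2*(k^2 - τ^2) - κ*(1+μ) ≤ D := by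
    have h := Complex.abs_re_le_norm ((c:ℂ)^2 * z^2 - (κ:ℂ)*(1+(μ:ℂ)))
    have hre : ((c:ℂ)^2 * z^2 - (κ:ℂ)*(1+(μ:ℂ))).re = c^2*(k^2 - τ^2) - κ*(1+μ) := by
      simp [hz, Complex.mul_re, Complex.mul_im, pow_two]
    rw [hre] at h
    exact le_trans (le_abs_self _) h
  have hττ2 : τ^2 ≤ τ₀^2 := by
    rw [← sq_abs]
    exact pow_le_pow_left₀ (abs_nonneg τ) hττ.le 2
  rcases le_or_gt (k^2) K2 with hk | hk
  · -- small k
    have step : (1 + k^2) ^ ((j:ℝ)/2) / D ≤ (1+K2) / (c^2*a*|τ|) := by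
      apply div_le_div₀ (by positivity) (by linarith) (by positivity) hD1
    refine le_trans step ?_
    have : (1+K2) / (c^2*a*|τ|) = C2 / |τ| := by
      rw [hC2]; field_simp
    rw [this]
    gcongr
    exact le_max_right _ _
  · -- large k
    have hDk : c^2 * k^2 / 2 ≤ D := by
      refine le_trans ?_ hD2
      have : κ*(1+μ)/c^2 * c^2 = κ*(1+μ) := by field_simp
      nlinarith
    have hkpos : 0 < k^2 := lt_trans hK2pos hk
    have step : (1 + k^2) ^ ((j:ℝ)/2) / D ≤ (1+k^2) / (c^2 * k^2 / 2) := by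
      apply div_le_div₀ (by positivity) hnum (by positivity) hDk
    refine le_trans step ?_
    have hstep2 : (1+k^2) / (c^2 * k^2 / 2) ≤ (2/c^2)*(1 + 1/K2) := by
      rw [div_le_iff₀ (by positivity)]
      have hrhs : 2/c^2*(1 + 1/K2)*(c^2*k^2/2) = k^2 + k^2/K2 := by
        field_simp
      rw [hrhs]
      have h2 : 1 ≤ k^2/K2 := (one_le_div hK2pos).mpr hk.le
      linarith
    refine le_trans hstep2 ?_
    have hC1' : C1 / τ₀ = (2/c^2)*(1 + 1/K2) := by
      rw [hC1]; field_simp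
    calc (2/c^2)*(1 + 1/K2) = C1 / τ₀ := hC1'.symm
      _ ≤ C1 / |τ| := by gcongr
      _ ≤ max C1 C2 / |τ| := by gcongr; exact le_max_left _ _
end

section
/- Let X_0 and X_1 be reflexive Banach spaces with X_1 continuously embedded in X_0, and let B(r) = {x in X_1 : ||x||_{X_1} ≤ r}. Suppose for some r_0 > 0 there is a map N : B(r_0) → X_1 such that (i) ||x||_{X_1} ≤ r_0 implies ||N(x)||_{X_1} ≤ r_0, and (ii) there exists alpha in (0,1) with ||N(x) - N(x')||_{X_0} ≤ alpha ||x - x'||_{X_0} whenever ||x||_{X_1}, ||x'||_{X_1} ≤ r_0. Then there exists a unique x* in X_1 with ||x*||_{X_1} ≤ r_0 and x* = N(x*). -/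
set_option maxHeartbeats 1000000 in
/-- Fixed point lemma: Let `X₀`, `X₁` be reflexive Banach spaces with `X₁`
continuously embedded in `X₀` (via an injective continuous linear map `J`). If
`N : X₁ → X₁` maps the closed ball of radius `r₀` (in `X₁`) into itself and is an
`X₀`-norm contraction on that ball, then `N` has a unique fixed point in that ball. -/
theorem stmt13 (X₀ X₁ : Type*)
    [NormedAddCommGroup X₀] [NormedSpace ℝ X₀] [CompleteSpace X₀]
    [NormedAddCommGroup X₁] [NormedSpace ℝ X₁] [CompleteSpace X₁]
    (hrefl₀ : Function.Surjective (NormedSpace.inclusionInDoubleDual ℝ X₀))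
    (hrefl₁ : Function.Surjective (NormedSpace.inclusionInDoubleDual ℝ X₁))
    (J : X₁ →L[ℝ] X₀) (hJ : Function.Injective J)
    (r₀ : ℝ) (hr₀ : 0 < r₀) (N : X₁ → X₁)
    (hmap : ∀ x : X₁, ‖x‖ ≤ r₀ → ‖N x‖ ≤ r₀)
    (hcontr : ∃ α : ℝ, 0 < α ∧ α < 1 ∧ ∀ x x' : X₁, ‖x‖ ≤ r₀ → ‖x'‖ ≤ r₀ →
      ‖J (N x) - J (N x')‖ ≤ α * ‖J x - J x'‖) :
    ∃! x : X₁, ‖x‖ ≤ r₀ ∧ N x = x := by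
  obtain ⟨α, hα0, hα1, hc⟩ := hcontr
  -- iterates
  set x : ℕ → X₁ := fun n => N^[n] 0 with hxdef
  have hx : ∀ n, ‖x n‖ ≤ r₀ := by
    intro n
    induction n with
    | zero => simpa [hxdef] using hr₀.le
    | succ n ih =>
      have : x (n + 1) = N (x n) := by
        simp [hxdef, Function.iterate_succ_apply']
      rw [this]; exact hmap _ ih
  have hsucc : ∀ n, x (n + 1) = N (x n) := by
    intro n; simp [hxdef, Function.iterate_succ_apply']
  -- geometric estimate
  have hgeo : ∀ n, dist (J (x n)) (J (x (n + 1))) ≤ ‖J (x 0) - J (x 1)‖ * α ^ n := by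
    intro n
    induction n with
    | zero => simp [dist_eq_norm]
    | succ n ih =>
      have h1 : ‖J (x (n + 1)) - J (x (n + 2))‖ ≤ α * ‖J (x n) - J (x (n + 1))‖ := by
        have h := hc (x n) (x (n + 1)) (hx n) (hx (n + 1))
        rwa [← hsucc (n + 1), ← hsucc n] at h
      rw [dist_eq_norm] at ih ⊢
      calc ‖J (x (n + 1)) - J (x (n + 2))‖ ≤ α * ‖J (x n) - J (x (n + 1))‖ := h1
        _ ≤ α * (‖J (x 0) - J (x 1)‖ * α ^ n) := by
            exact mul_le_mul_of_nonneg_left ih hα0.le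
        _ = ‖J (x 0) - J (x 1)‖ * α ^ (n + 1) := by ring
  have hcauchy : CauchySeq fun n => J (x n) :=
    cauchySeq_of_le_geometric α _ hα1 hgeo
  obtain ⟨y, hy⟩ := cauchySeq_tendsto_of_complete hcauchy
  -- weak-* cluster point in the double dual of X₁
  let ι := NormedSpace.inclusionInDoubleDualLi ℝ (E := X₁)
  let φ : ℕ → WeakDual ℝ (StrongDual ℝ X₁) := fun n =>
    StrongDual.toWeakDual (ι (x n))
  have hφball : ∀ n, φ n ∈ (WeakDual.toStrongDual ⁻¹'
      Metric.closedBall (0 : StrongDual ℝ (StrongDual ℝ X₁)) r₀) := by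
    intro n
    simp only [Set.mem_preimage, Metric.mem_closedBall, dist_zero_right]
    exact (dist_zero_right (ι (x n))).le.trans ((ι.norm_map (x n)).le.trans (hx n))
  have hcomp := WeakDual.isCompact_closedBall (𝕜 := ℝ) (E := StrongDual ℝ X₁)
    (0 : StrongDual ℝ (StrongDual ℝ X₁)) r₀
  obtain ⟨Φ, hΦmem, hΦcl⟩ := hcomp.exists_clusterPt (f := Filter.map φ Filter.atTop)
    (by rw [Filter.le_principal_iff, Filter.mem_map]
        exact Filter.univ_mem' hφball)
  -- Φ comes from X₁
  obtain ⟨xs, hxs⟩ := hrefl₁ (WeakDual.toStrongDual Φ)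
  have hxsnorm : ‖xs‖ ≤ r₀ := by
    have h1 : ‖NormedSpace.inclusionInDoubleDual ℝ X₁ xs‖ ≤ r₀ := by
      rw [hxs]
      simpa [dist_zero_right] using hΦmem
    have h2 : ‖NormedSpace.inclusionInDoubleDual ℝ X₁ xs‖ = ‖xs‖ := ι.norm_map xs
    linarith
  -- evaluations: for every g : Dual X₁, Φ g is the limit of g (x n) along a cluster point
  have heval : ∀ g : StrongDual ℝ X₁,
      ClusterPt (Φ g) (Filter.map (fun n => g (x n)) Filter.atTop) := by
    intro g
    have hcont : Continuous fun Ψ : WeakDual ℝ (StrongDual ℝ X₁) => Ψ g :=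
      WeakDual.eval_continuous g
    have := hΦcl.map (f := fun Ψ : WeakDual ℝ (StrongDual ℝ X₁) => Ψ g)
      hcont.continuousAt Filter.tendsto_map
    exact this
  have hgxs : ∀ g : StrongDual ℝ X₁, g xs = Φ g := by
    intro g
    have : NormedSpace.inclusionInDoubleDual ℝ X₁ xs g = Φ g := by rw [hxs]; rfl
    simpa [NormedSpace.inclusionInDoubleDual] using this
  -- J xs = y
  have hJxs : J xs = y := by
    rw [NormedSpace.eq_iff_forall_dual_eq ℝ]
    intro f
    have hfy : Filter.Tendsto (fun n => f (J (x n))) Filter.atTop (nhds (f y)) :=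
      (f.continuous.tendsto y).comp hy
    have hcl := heval (f.comp J)
    have hcl' : ClusterPt ((f.comp J) xs) (Filter.map (fun n => f (J (x n))) Filter.atTop) := by
      rw [hgxs (f.comp J)]
      simpa [ContinuousLinearMap.comp_apply] using hcl
    have : (f.comp J) xs = f y := by
      have hne : (nhds ((f.comp J) xs) ⊓ nhds (f y)).NeBot :=
        Filter.NeBot.mono hcl' (inf_le_inf_left _ hfy)
      exact eq_of_nhds_neBot hne
    simpa using this
  -- xs is a fixed point
  have hJNxs : J (N xs) = y := by
    have htend : Filter.Tendsto (fun n => J (x (n + 1))) Filter.atTop (nhds (J (N xs))) := by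
      rw [tendsto_iff_dist_tendsto_zero]
      have hb : ∀ n, dist (J (x (n + 1))) (J (N xs)) ≤ α * dist (J (x n)) (J xs) := by
        intro n
        rw [dist_eq_norm, dist_eq_norm, hsucc n]
        exact hc _ _ (hx n) hxsnorm
      have h0 : Filter.Tendsto (fun n => α * dist (J (x n)) (J xs)) Filter.atTop (nhds 0) := by
        have := (tendsto_iff_dist_tendsto_zero.mp (hJxs ▸ hy)).const_mul α
        simpa using this
      exact squeeze_zero (fun n => dist_nonneg) hb h0
    have htend' : Filter.Tendsto (fun n => J (x (n + 1))) Filter.atTop (nhds y) :=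
      hy.comp (Filter.tendsto_add_atTop_nat 1)
    exact tendsto_nhds_unique htend htend'
  have hfix : N xs = xs := hJ (by rw [hJNxs, hJxs])
  refine ⟨xs, ⟨hxsnorm, hfix⟩, ?_⟩
  rintro z ⟨hz, hzfix⟩
  have : ‖J z - J xs‖ ≤ α * ‖J z - J xs‖ := by
    have := hc z xs hz hxsnorm
    rwa [hzfix, hfix] at this
  have h0 : ‖J z - J xs‖ = 0 := by
    have hnn := norm_nonneg (J z - J xs)
    nlinarith
  have : J z = J xs := by rwa [← sub_eq_zero, ← norm_eq_zero]
  exact hJ this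
end
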